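/- Let k ≥ l ≥ 2 be integers and let G be a properly edge-coloured graph on n vertices with no rainbow cycle of length 2k+1 such that every edge of G is contained in a rainbow cycle of length 2l+1. Then there is a constant C = C(k) such that for every vertex a of G the number of paths of length 2 starting at a is at most C·n. -/

import Mathlib

open SimpleGraph

/-- A colouring of (potential) edges is proper on `G` if no two distinct edges of `G`
sharing a vertex receive the same colour. -/
def ProperColoring {V γ : Type*} (G : SimpleGraph V) (c : Sym2 V → γ) : Prop :=
  ∀ e f : Sym2 V, e ∈ G.edgeSet → f ∈ G.edgeSet → e ≠ f → (∃ v, v ∈ e ∧ v ∈ f) → c e ≠ c f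

/-- `G` (with colouring `c`) contains a rainbow cycle of length `t`. -/
def HasRainbowCycle {V γ : Type*} (G : SimpleGraph V) (c : Sym2 V → γ) (t : ℕ) : Prop :=
  ∃ (u : V) (w : G.Walk u u), w.IsCycle ∧ w.length = t ∧ (w.edges.map c).Nodup

section Aux

variable {V : Type} {γ : Type} {G : SimpleGraph V}

lemma peel_lemma [DecidableEq V] (D : ℕ) :
    ∀ (F : Finset (V × V)),
      D * ((F.image Prod.fst).card + (F.image Prod.snd).card) < F.card →
      ∃ F' ⊆ F, F'.Nonempty ∧ ∀ p ∈ F',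
        D ≤ (F'.filter (fun q => q.1 = p.1)).card ∧
        D ≤ (F'.filter (fun q => q.2 = p.2)).card := by
  intro F
  induction F using Finset.strongInductionOn with
  | _ F ih =>
    intro hF
    by_cases hbad : ∃ p ∈ F, (F.filter (fun q => q.1 = p.1)).card < D ∨
        (F.filter (fun q => q.2 = p.2)).card < D
    · obtain ⟨p, hp, hcase⟩ := hbad
      have himgf : p.1 ∈ F.image Prod.fst := Finset.mem_image_of_mem _ hp
      have himgs : p.2 ∈ F.image Prod.snd := Finset.mem_image_of_mem _ hp
      rcases hcase with h1 | h1
      · set F2 := F.filter (fun q => ¬ q.1 = p.1) with hF2def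
        have hcardsplit : (F.filter (fun q => q.1 = p.1)).card + F2.card = F.card :=
          Finset.card_filter_add_card_filter_not _
        have hpmem : p ∈ F.filter (fun q => q.1 = p.1) := by
          simp [Finset.mem_filter, hp]
        have hbcpos : 0 < (F.filter (fun q => q.1 = p.1)).card := Finset.card_pos.2 ⟨p, hpmem⟩
        have hssub : F2 ⊂ F := by
          refine Finset.ssubset_iff_of_subset (Finset.filter_subset _ _) |>.2 ⟨p, hp, ?_⟩
          simp [hF2def]
        -- image bounds
        have hif : (F2.image Prod.fst).card + 1 ≤ (F.image Prod.fst).card := by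
          have hsub : F2.image Prod.fst ⊆ (F.image Prod.fst).erase p.1 := by
            intro x hx
            obtain ⟨q, hq, rfl⟩ := Finset.mem_image.1 hx
            have hq' := Finset.mem_filter.1 hq
            exact Finset.mem_erase.2 ⟨hq'.2, Finset.mem_image_of_mem _ hq'.1⟩
          calc (F2.image Prod.fst).card + 1 ≤ ((F.image Prod.fst).erase p.1).card + 1 :=
                by exact Nat.add_le_add_right (Finset.card_le_card hsub) 1
            _ = (F.image Prod.fst).card := by
                have hpos : 0 < (F.image Prod.fst).card := Finset.card_pos.2 ⟨p.1, himgf⟩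
                rw [Finset.card_erase_of_mem himgf]
                omega
        have his : (F2.image Prod.snd).card ≤ (F.image Prod.snd).card :=
          Finset.card_le_card (Finset.image_subset_image (Finset.filter_subset _ _))
        have hmul : D * ((F2.image Prod.fst).card + (F2.image Prod.snd).card) + D ≤
            D * ((F.image Prod.fst).card + (F.image Prod.snd).card) := by
          have : (F2.image Prod.fst).card + (F2.image Prod.snd).card + 1 ≤
              (F.image Prod.fst).card + (F.image Prod.snd).card := by omega
          calc D * ((F2.image Prod.fst).card + (F2.image Prod.snd).card) + D
              = D * ((F2.image Prod.fst).card + (F2.image Prod.snd).card + 1) := by ring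
            _ ≤ D * ((F.image Prod.fst).card + (F.image Prod.snd).card) :=
                Nat.mul_le_mul_left D this
        have hrec : D * ((F2.image Prod.fst).card + (F2.image Prod.snd).card) < F2.card := by
          linarith
        obtain ⟨F', hsub', hne, hdeg⟩ := ih F2 hssub hrec
        exact ⟨F', hsub'.trans (Finset.filter_subset _ _), hne, hdeg⟩
      · set F2 := F.filter (fun q => ¬ q.2 = p.2) with hF2def
        have hcardsplit : (F.filter (fun q => q.2 = p.2)).card + F2.card = F.card :=
          Finset.card_filter_add_card_filter_not _
        have hpmem : p ∈ F.filter (fun q => q.2 = p.2) := by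
          simp [Finset.mem_filter, hp]
        have hbcpos : 0 < (F.filter (fun q => q.2 = p.2)).card := Finset.card_pos.2 ⟨p, hpmem⟩
        have hssub : F2 ⊂ F := by
          refine Finset.ssubset_iff_of_subset (Finset.filter_subset _ _) |>.2 ⟨p, hp, ?_⟩
          simp [hF2def]
        have hif : (F2.image Prod.snd).card + 1 ≤ (F.image Prod.snd).card := by
          have hsub : F2.image Prod.snd ⊆ (F.image Prod.snd).erase p.2 := by
            intro x hx
            obtain ⟨q, hq, rfl⟩ := Finset.mem_image.1 hx
            have hq' := Finset.mem_filter.1 hq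
            exact Finset.mem_erase.2 ⟨hq'.2, Finset.mem_image_of_mem _ hq'.1⟩
          calc (F2.image Prod.snd).card + 1 ≤ ((F.image Prod.snd).erase p.2).card + 1 :=
                by exact Nat.add_le_add_right (Finset.card_le_card hsub) 1
            _ = (F.image Prod.snd).card := by
                have hpos : 0 < (F.image Prod.snd).card := Finset.card_pos.2 ⟨p.2, himgs⟩
                rw [Finset.card_erase_of_mem himgs]
                omega
        have his : (F2.image Prod.fst).card ≤ (F.image Prod.fst).card :=
          Finset.card_le_card (Finset.image_subset_image (Finset.filter_subset _ _))
        have hmul : D * ((F2.image Prod.fst).card + (F2.image Prod.snd).card) + D ≤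
            D * ((F.image Prod.fst).card + (F.image Prod.snd).card) := by
          have : (F2.image Prod.fst).card + (F2.image Prod.snd).card + 1 ≤
              (F.image Prod.fst).card + (F.image Prod.snd).card := by omega
          calc D * ((F2.image Prod.fst).card + (F2.image Prod.snd).card) + D
              = D * ((F2.image Prod.fst).card + (F2.image Prod.snd).card + 1) := by ring
            _ ≤ D * ((F.image Prod.fst).card + (F.image Prod.snd).card) :=
                Nat.mul_le_mul_left D this
        have hrec : D * ((F2.image Prod.fst).card + (F2.image Prod.snd).card) < F2.card := by
          linarith
        obtain ⟨F', hsub', hne, hdeg⟩ := ih F2 hssub hrec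
        exact ⟨F', hsub'.trans (Finset.filter_subset _ _), hne, hdeg⟩
    · push_neg at hbad
      have hnonempty : F.Nonempty := by
        refine Finset.card_pos.1 ?_
        omega
      exact ⟨F, Finset.Subset.refl _, hnonempty, fun p hp => hbad p hp⟩

lemma path_last_edge : ∀ {b y : V} (r : G.Walk b y), r.support.Nodup →
    ∀ e ∈ r.edges, y ∈ e →
    ∃ (d : V) (hd : G.Adj d y) (r' : G.Walk b d),
      r = r'.append (Walk.cons hd Walk.nil) ∧ e = s(d, y) := by
  intro b y r
  induction r with
  | nil =>
    intro _ e he _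
    simp at he
  | @cons u v w h rr ih =>
    intro hnd e he hy
    rw [Walk.edges_cons, List.mem_cons] at he
    have hnd' : (u :: rr.support).Nodup := by
      simpa using hnd
    rcases he with rfl | he
    · rcases Sym2.mem_iff.1 hy with rfl | rfl
      · exfalso
        have hmem : w ∈ rr.support := Walk.end_mem_support rr
        exact (List.nodup_cons.1 hnd').1 hmem
      · have hrrnil : rr = Walk.nil := by
          cases rr with
          | nil => rfl
          | @cons _ v2 _ h' rr' =>
            exfalso
            have hmem : w ∈ rr'.support := Walk.end_mem_support rr'
            have h2 := (List.nodup_cons.1 hnd').2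
            rw [Walk.support_cons] at h2
            exact (List.nodup_cons.1 h2).1 hmem
        subst hrrnil
        exact ⟨u, h, Walk.nil, by simp, rfl⟩
    · obtain ⟨d, hd, r'', heq, hee⟩ := ih (List.nodup_cons.1 hnd').2 e he hy
      refine ⟨d, hd, Walk.cons h r'', ?_, hee⟩
      rw [Walk.cons_append, heq]


lemma extract_path_at {c : Sym2 V → γ} {a x : V} (w2 : G.Walk x x)
    (hcyc : w2.IsCycle) (hrb : (w2.edges.map c).Nodup) (hax : G.Adj a x)
    (he : s(a, x) ∈ w2.edges) :
    ∃ q : G.Walk x a, q.IsPath ∧ q.length + 1 = w2.length ∧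
      (c s(a, x) :: q.edges.map c).Nodup := by
  cases w2 with
  | nil => simp at he
  | @cons _ v _ h rr =>
    have hpath : rr.IsPath ∧ s(x, v) ∉ rr.edges := (Walk.cons_isCycle_iff rr h).1 hcyc
    rw [Walk.edges_cons, List.mem_cons] at he
    have hrb' : (c s(x, v) :: rr.edges.map c).Nodup := by
      simpa using hrb
    rcases he with heq | he
    · have hva : v = a := by
        rcases Sym2.eq_iff.1 heq with ⟨h1, h2⟩ | ⟨h1, h2⟩
        · exact absurd h1 hax.ne
        · exact h1.symm
      subst hva
      refine ⟨rr.reverse, hpath.1.reverse, by simp, ?_⟩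
      rw [Walk.edges_reverse, List.map_reverse]
      have hperm : (c s(v, x) :: (rr.edges.map c).reverse).Perm
          (c s(x, v) :: rr.edges.map c) := by
        rw [Sym2.eq_swap]
        exact List.Perm.cons _ (List.reverse_perm _)
      exact hperm.nodup_iff.2 hrb'
    · have hxe : x ∈ s(a, x) := Sym2.mem_iff.2 (Or.inr rfl)
      obtain ⟨d, hd, r', heq, hee⟩ :=
        path_last_edge rr hpath.1.support_nodup (s(a, x)) he hxe
      have hda : d = a := by
        rcases Sym2.eq_iff.1 hee with ⟨h1, h2⟩ | ⟨h1, h2⟩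
        · exact h1.symm
        · exact absurd h1 hax.ne
      subst hda
      have hrrsup : rr.support = r'.support ++ [x] := by
        rw [heq, Walk.support_append]
        simp
      have hnd : rr.support.Nodup := hpath.1.support_nodup
      rw [hrrsup] at hnd
      have hnd2 : r'.support.Nodup ∧ x ∉ r'.support := by
        have h1 := List.Nodup.of_append_left hnd
        have h2 := List.disjoint_of_nodup_append hnd
        exact ⟨h1, fun hx => h2 hx (by simp)⟩
      have hrredges : rr.edges = r'.edges ++ [s(d, x)] := by
        rw [heq, Walk.edges_append]
        simp
      refine ⟨Walk.cons h r', ?_, ?_, ?_⟩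
      · rw [Walk.isPath_def, Walk.support_cons]
        exact List.nodup_cons.2 ⟨hnd2.2, hnd2.1⟩
      · rw [Walk.length_cons, Walk.length_cons, heq, Walk.length_append]
        simp
      · rw [Walk.edges_cons, List.map_cons]
        have hrb2 : (c s(x, v) :: (r'.edges.map c ++ [c s(d, x)])).Nodup := by
          rw [hrredges] at hrb'
          simpa using hrb'
        have hperm : (c s(x, v) :: (r'.edges.map c ++ [c s(d, x)])).Perm
            (c s(d, x) :: c s(x, v) :: r'.edges.map c) :=
          ((List.perm_append_singleton _ _).cons _).trans (List.Perm.swap _ _ _)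
        exact hperm.nodup hrb2


lemma extract_path [DecidableEq V] {c : Sym2 V → γ} {a x u : V} (w : G.Walk u u)
    (hw : w.IsCycle) (hrb : (w.edges.map c).Nodup) (hax : G.Adj a x)
    (he : s(a, x) ∈ w.edges) :
    ∃ q : G.Walk x a, q.IsPath ∧ q.length + 1 = w.length ∧
      (c s(a, x) :: q.edges.map c).Nodup := by
  have hxsup : x ∈ w.support := Walk.snd_mem_support_of_mem_edges w he
  have hperm : (w.rotate x hxsup).edges.Perm w.edges := (Walk.rotate_edges w x hxsup).perm
  have hlen : (w.rotate x hxsup).length = w.length := by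
    rw [← Walk.length_edges, ← Walk.length_edges]
    exact hperm.length_eq
  obtain ⟨q, hq1, hq2, hq3⟩ := extract_path_at (w.rotate x hxsup) (hw.rotate hxsup)
    (((hperm.map c).nodup_iff).2 hrb) hax (hperm.mem_iff.2 he)
  exact ⟨q, hq1, by omega, hq3⟩

lemma proper_ne {c : Sym2 V → γ} (hp : ProperColoring G c) {u s t : V}
    (hus : G.Adj u s) (hut : G.Adj u t) (hst : s ≠ t) : c s(u, s) ≠ c s(u, t) := by
  apply hp _ _ (G.mem_edgeSet.2 hus) (G.mem_edgeSet.2 hut)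
  · intro h
    rcases Sym2.eq_iff.1 h with ⟨-, h2⟩ | ⟨h1, -⟩
    · exact hst h2
    · exact hut.ne h1
  · exact ⟨u, Sym2.mem_iff.2 (Or.inl rfl), Sym2.mem_iff.2 (Or.inl rfl)⟩


lemma exists_avoid [DecidableEq V] (A B : Finset V) (h : B.card < A.card) :
    ∃ x ∈ A, x ∉ B := by
  have h1 := Finset.le_card_sdiff B A
  have h2 : 0 < (A \ B).card := by omega
  obtain ⟨x, hx⟩ := Finset.card_pos.1 h2
  exact ⟨x, (Finset.mem_sdiff.1 hx).1, (Finset.mem_sdiff.1 hx).2⟩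


lemma chain_lemma [DecidableEq V] [DecidableEq γ] {c : Sym2 V → γ}
    (hp : ProperColoring G c) (a : V) (F' : Finset (V × V)) (K : ℕ)
    (hFmem : ∀ p ∈ F', G.Adj a p.1 ∧ G.Adj p.1 p.2 ∧ p.2 ≠ a)
    (hdegL : ∀ p ∈ F', 6 * K + 12 ≤ (F'.filter (fun q => q.1 = p.1)).card)
    (hdegR : ∀ p ∈ F', 6 * K + 12 ≤ (F'.filter (fun q => q.2 = p.2)).card) :
    ∀ (s : ℕ) (v : V) (FV : Finset V) (FC : Finset γ),
      (∃ z, (v, z) ∈ F') → FV.card + 2 * s ≤ K → FC.card + 2 * s ≤ K →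
      v ∉ FV → a ∉ FV → c s(a, v) ∉ FC →
      ∃ W : G.Walk v a, W.length = 2 * s + 1 ∧ W.IsPath ∧
        (∀ u ∈ W.support, u ∉ FV) ∧ (W.edges.map c).Nodup ∧
        (∀ e ∈ W.edges, c e ∉ FC) := by
  intro s
  induction s with
  | zero =>
    intro v FV FC hv hFV hFC hvFV haFV hcv
    obtain ⟨z, hz⟩ := hv
    have hav : G.Adj a v := (hFmem _ hz).1
    refine ⟨Walk.cons hav.symm Walk.nil, by simp, ?_, ?_, by simp, ?_⟩
    · rw [Walk.isPath_def]
      simp [hav.ne']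
    · intro u hu
      rw [Walk.support_cons] at hu
      simp only [Walk.support_nil, List.mem_cons, List.mem_singleton] at hu
      rcases hu with rfl | hu
      · exact hvFV
      · simp at hu
        subst hu
        exact haFV
    · intro e he
      simp only [Walk.edges_cons, Walk.edges_nil, List.mem_singleton] at he
      subst he
      rwa [Sym2.eq_swap]
  | succ s ih =>
    intro v FV FC hv hFV hFC hvFV haFV hcv
    obtain ⟨z0, hz0⟩ := hv
    have hav : G.Adj a v := (hFmem _ hz0).1
    ---- Step 1 : choose z
    set Cz := (F'.filter (fun q => q.1 = v)).image Prod.snd with hCzdef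
    have hCzmem : ∀ z ∈ Cz, (v, z) ∈ F' := by
      intro z hzc
      obtain ⟨q, hq, hq2⟩ := Finset.mem_image.1 hzc
      have hqf := Finset.mem_filter.1 hq
      have hqe : q = (v, z) := Prod.ext hqf.2 hq2
      rw [hqe] at hq
      exact (Finset.mem_filter.1 hq).1
    have hCzcard : 6 * K + 12 ≤ Cz.card := by
      rw [hCzdef, Finset.card_image_of_injOn]
      · exact hdegL _ hz0
      · intro q hq q' hq' hqq
        simp only [Finset.coe_filter, Set.mem_setOf_eq] at hq hq'
        exact Prod.ext (hq.2.trans hq'.2.symm) hqq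
    set badz := Cz.filter (fun z => c s(v, z) ∈ FC) with hbadzdef
    have hbadz : badz.card ≤ FC.card := by
      apply Finset.card_le_card_of_injOn (fun z => c s(v, z))
      · intro z hzb
        exact (Finset.mem_filter.1 hzb).2
      · intro z hzb z' hzb' hcc
        have hz1 : (v, z) ∈ F' := hCzmem _ (Finset.mem_filter.1 (Finset.mem_coe.1 hzb)).1
        have hz2 : (v, z') ∈ F' := hCzmem _ (Finset.mem_filter.1 (Finset.mem_coe.1 hzb')).1
        by_contra hne
        exact proper_ne hp (hFmem _ hz1).2.1 (hFmem _ hz2).2.1 hne hcc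
    have hsmall : (FV ∪ {a, v} ∪ badz).card < Cz.card := by
      have h1 : (FV ∪ {a, v} ∪ badz).card ≤ FV.card + 2 + badz.card := by
        calc (FV ∪ {a, v} ∪ badz).card ≤ (FV ∪ {a, v}).card + badz.card :=
              Finset.card_union_le _ _
          _ ≤ FV.card + ({a, v} : Finset V).card + badz.card := by
              have := Finset.card_union_le FV ({a, v} : Finset V)
              omega
          _ ≤ FV.card + 2 + badz.card := by
              have : ({a, v} : Finset V).card ≤ 2 := by
                refine le_trans (Finset.card_insert_le _ _) ?_
                simp
              omega
      have h2 : FV.card + 2 + badz.card ≤ K + 2 + K := by omega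
      omega
    obtain ⟨z, hzCz, hznot⟩ := exists_avoid _ _ hsmall
    have hvz : (v, z) ∈ F' := hCzmem _ hzCz
    have hAdjvz : G.Adj v z := (hFmem _ hvz).2.1
    have hzna : z ≠ a := (hFmem _ hvz).2.2
    have hznFV : z ∉ FV := fun h =>
      hznot (Finset.mem_union_left _ (Finset.mem_union_left _ h))
    have hzbadz : c s(v, z) ∉ FC := fun h =>
      hznot (Finset.mem_union_right _ (Finset.mem_filter.2 ⟨hzCz, h⟩))
    ---- Step 2 : choose x'
    set Cx := (F'.filter (fun q => q.2 = z)).image Prod.fst with hCxdef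
    have hCxmem : ∀ y ∈ Cx, (y, z) ∈ F' := by
      intro y hyc
      obtain ⟨q, hq, hq2⟩ := Finset.mem_image.1 hyc
      have hqf := Finset.mem_filter.1 hq
      have hqe : q = (y, z) := Prod.ext hq2 hqf.2
      rw [hqe] at hq
      exact (Finset.mem_filter.1 hq).1
    have hCxcard : 6 * K + 12 ≤ Cx.card := by
      rw [hCxdef, Finset.card_image_of_injOn]
      · exact hdegR _ hvz
      · intro q hq q' hq' hqq
        simp only [Finset.coe_filter, Set.mem_setOf_eq] at hq hq'
        exact Prod.ext hqq (hq.2.trans hq'.2.symm)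
    set badx1 := Cx.filter (fun y => c s(z, y) ∈ insert (c s(v, z)) FC) with hbadx1def
    have hbadx1 : badx1.card ≤ FC.card + 1 := by
      have h1 : badx1.card ≤ (insert (c s(v, z)) FC).card := by
        apply Finset.card_le_card_of_injOn (fun y => c s(z, y))
        · intro y hyb
          exact (Finset.mem_filter.1 hyb).2
        · intro y hyb y' hyb' hcc
          have hy1 : (y, z) ∈ F' := hCxmem _ (Finset.mem_filter.1 (Finset.mem_coe.1 hyb)).1
          have hy2 : (y', z) ∈ F' := hCxmem _ (Finset.mem_filter.1 (Finset.mem_coe.1 hyb')).1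
          by_contra hne
          exact proper_ne hp (hFmem _ hy1).2.1.symm (hFmem _ hy2).2.1.symm hne hcc
      have h2 := Finset.card_insert_le (c s(v, z)) FC
      omega
    set badx2 := Cx.filter (fun y => c s(a, y) ∈ insert (c s(v, z)) FC) with hbadx2def
    have hbadx2 : badx2.card ≤ FC.card + 1 := by
      have h1 : badx2.card ≤ (insert (c s(v, z)) FC).card := by
        apply Finset.card_le_card_of_injOn (fun y => c s(a, y))
        · intro y hyb
          exact (Finset.mem_filter.1 hyb).2
        · intro y hyb y' hyb' hcc
          have hy1 : (y, z) ∈ F' := hCxmem _ (Finset.mem_filter.1 (Finset.mem_coe.1 hyb)).1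
          have hy2 : (y', z) ∈ F' := hCxmem _ (Finset.mem_filter.1 (Finset.mem_coe.1 hyb')).1
          by_contra hne
          exact proper_ne hp (hFmem _ hy1).1 (hFmem _ hy2).1 hne hcc
      have h2 := Finset.card_insert_le (c s(v, z)) FC
      omega
    have hsmall2 : (FV ∪ {a, v, z} ∪ badx1 ∪ badx2).card < Cx.card := by
      have h1 : (FV ∪ {a, v, z} ∪ badx1 ∪ badx2).card ≤
          FV.card + 3 + badx1.card + badx2.card := by
        have e1 := Finset.card_union_le (FV ∪ {a, v, z} ∪ badx1) badx2
        have e2 := Finset.card_union_le (FV ∪ {a, v, z}) badx1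
        have e3 := Finset.card_union_le FV ({a, v, z} : Finset V)
        have e4 : ({a, v, z} : Finset V).card ≤ 3 := by
          refine le_trans (Finset.card_insert_le _ _) ?_
          have := Finset.card_insert_le v ({z} : Finset V)
          simp only [Finset.card_singleton] at this
          omega
        omega
      omega
    obtain ⟨y, hyCx, hynot⟩ := exists_avoid _ _ hsmall2
    have hyzF : (y, z) ∈ F' := hCxmem _ hyCx
    have hAdjay : G.Adj a y := (hFmem _ hyzF).1
    have hAdjyz : G.Adj y z := (hFmem _ hyzF).2.1
    have hyFV : y ∉ FV := fun h => hynot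
      (Finset.mem_union_left _ (Finset.mem_union_left _ (Finset.mem_union_left _ h)))
    have hyv : y ≠ v := fun h => hynot
      (Finset.mem_union_left _ (Finset.mem_union_left _ (Finset.mem_union_right _
        (Finset.mem_insert.2 (Or.inr (Finset.mem_insert.2 (Or.inl h)))))))
    have hyneqz : y ≠ z := hAdjyz.ne
    have hya : y ≠ a := hAdjay.ne'
    have hczy : c s(z, y) ∉ insert (c s(v, z)) FC := fun h => hynot
      (Finset.mem_union_left _ (Finset.mem_union_right _ (Finset.mem_filter.2 ⟨hyCx, h⟩)))
    have hcay : c s(a, y) ∉ insert (c s(v, z)) FC := fun h => hynot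
      (Finset.mem_union_right _ (Finset.mem_filter.2 ⟨hyCx, h⟩))
    ---- recursive call
    have hcay2 : c s(a, y) ∉ insert (c s(v, z)) (insert (c s(z, y)) FC) := by
      intro h
      rcases Finset.mem_insert.1 h with h | h
      · exact hcay (Finset.mem_insert.2 (Or.inl h))
      rcases Finset.mem_insert.1 h with h | h
      · have : c s(y, a) ≠ c s(y, z) := proper_ne hp hAdjay.symm hAdjyz (fun hh => hzna hh.symm)
        rw [Sym2.eq_swap] at this
        rw [show s(y, z) = s(z, y) from Sym2.eq_swap] at this
        exact this h
      · exact hcay (Finset.mem_insert.2 (Or.inr h))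
    obtain ⟨W', hWlen, hWpath, hWsup, hWnodup, hWcol⟩ :=
      ih y (FV ∪ {v, z}) (insert (c s(v, z)) (insert (c s(z, y)) FC)) ⟨z, hyzF⟩
        (by
          have e1 := Finset.card_union_le FV ({v, z} : Finset V)
          have e2 : ({v, z} : Finset V).card ≤ 2 := by
            apply le_trans (Finset.card_insert_le _ _)
            simp
          omega)
        (by
          have e1 := Finset.card_insert_le (c s(v, z)) (insert (c s(z, y)) FC)
          have e2 := Finset.card_insert_le (c s(z, y)) FC
          omega)
        (by
          simp only [Finset.mem_union, Finset.mem_insert, Finset.mem_singleton]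
          push_neg
          exact ⟨hyFV, hyv, hyneqz⟩)
        (by
          simp only [Finset.mem_union, Finset.mem_insert, Finset.mem_singleton]
          push_neg
          exact ⟨haFV, hav.ne, fun h => hzna h.symm⟩)
        hcay2
    ---- assemble the walk
    refine ⟨Walk.cons hAdjvz (Walk.cons hAdjyz.symm W'), ?_, ?_, ?_, ?_, ?_⟩
    · simp [hWlen]
      ring
    · rw [Walk.isPath_def, Walk.support_cons, Walk.support_cons]
      have hvW : v ∉ W'.support := by
        intro h
        exact hWsup v h (by simp)
      have hzW : z ∉ W'.support := by
        intro h
        exact hWsup z h (by simp)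
      refine List.nodup_cons.2 ⟨?_, List.nodup_cons.2 ⟨hzW, hWpath.support_nodup⟩⟩
      intro h
      rcases List.mem_cons.1 h with h | h
      · exact hAdjvz.ne h
      · exact hvW h
    · intro u hu
      rw [Walk.support_cons, Walk.support_cons] at hu
      rcases List.mem_cons.1 hu with rfl | hu
      · exact hvFV
      rcases List.mem_cons.1 hu with rfl | hu
      · exact hznFV
      · intro h
        exact hWsup u hu (Finset.mem_union.2 (Or.inl h))
    · rw [Walk.edges_cons, Walk.edges_cons, List.map_cons, List.map_cons]
      have hWc1 : c s(v, z) ∉ W'.edges.map c := by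
        intro h
        obtain ⟨e, he, hce⟩ := List.mem_map.1 h
        exact hWcol e he (hce ▸ Finset.mem_insert_self _ _)
      have hWc2 : c s(z, y) ∉ W'.edges.map c := by
        intro h
        obtain ⟨e, he, hce⟩ := List.mem_map.1 h
        exact hWcol e he (hce ▸ Finset.mem_insert.2 (Or.inr (Finset.mem_insert_self _ _)))
      have hne12 : c s(v, z) ≠ c s(z, y) := by
        have : c s(z, v) ≠ c s(z, y) := proper_ne hp hAdjvz.symm hAdjyz.symm
          (fun h => hyv h.symm)
        rwa [show s(z, v) = s(v, z) from Sym2.eq_swap] at this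
      refine List.nodup_cons.2 ⟨?_, List.nodup_cons.2 ⟨hWc2, hWnodup⟩⟩
      intro h
      rcases List.mem_cons.1 h with h | h
      · exact hne12 h
      · exact hWc1 h
    · intro e he
      rw [Walk.edges_cons, Walk.edges_cons] at he
      rcases List.mem_cons.1 he with rfl | he
      · exact hzbadz
      rcases List.mem_cons.1 he with rfl | he
      · intro h
        exact hczy (Finset.mem_insert.2 (Or.inr h))
      · intro h
        exact hWcol e he (Finset.mem_insert.2 (Or.inr (Finset.mem_insert.2 (Or.inr h))))

end Aux

/-- let `k ≥ l ≥ 2`, and let `G` be properly edge-coloured with no rainbow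
`C_{2k+1}` such that every edge lies in a rainbow `C_{2l+1}`. Then every vertex starts
at most `C·n` paths of length 2, for a constant `C = C(k)`. -/
theorem paths_of_length_two_no_rainbow_odd_cycle (k l : ℕ) (hl : 2 ≤ l) (hlk : l ≤ k) :
    ∃ C : ℕ, ∀ (V : Type) [Fintype V] (G : SimpleGraph V) (γ : Type) (c : Sym2 V → γ),
      ProperColoring G c → ¬ HasRainbowCycle G c (2 * k + 1) →
      (∀ e ∈ G.edgeSet, ∃ (u : V) (w : G.Walk u u), w.IsCycle ∧ w.length = 2 * l + 1 ∧
        (w.edges.map c).Nodup ∧ e ∈ w.edges) →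
      ∀ a : V,
        {p : V × V | G.Adj a p.1 ∧ G.Adj p.1 p.2 ∧ p.2 ≠ a}.ncard ≤ C * Fintype.card V := by
  classical
  refine ⟨2 * (6 * (2 * k + 2) + 12), ?_⟩
  intro V _ G γ c hp hno hcyc a
  by_contra hcon
  push_neg at hcon
  set F : Finset (V × V) :=
    Finset.univ.filter (fun p => G.Adj a p.1 ∧ G.Adj p.1 p.2 ∧ p.2 ≠ a) with hFdef
  have hsetF : {p : V × V | G.Adj a p.1 ∧ G.Adj p.1 p.2 ∧ p.2 ≠ a} = ↑F := by
    ext p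
    simp [hFdef]
  rw [hsetF, Set.ncard_coe_finset] at hcon
  -- peeling
  have himg : (6 * (2 * k + 2) + 12) *
      ((F.image Prod.fst).card + (F.image Prod.snd).card) < F.card := by
    have h1 : (F.image Prod.fst).card ≤ Fintype.card V := by
      rw [← Finset.card_univ]
      exact Finset.card_le_card (Finset.subset_univ _)
    have h2 : (F.image Prod.snd).card ≤ Fintype.card V := by
      rw [← Finset.card_univ]
      exact Finset.card_le_card (Finset.subset_univ _)
    calc (6 * (2 * k + 2) + 12) * ((F.image Prod.fst).card + (F.image Prod.snd).card)
        ≤ (6 * (2 * k + 2) + 12) * (Fintype.card V + Fintype.card V) :=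
          Nat.mul_le_mul_left _ (by omega)
      _ = 2 * (6 * (2 * k + 2) + 12) * Fintype.card V := by ring
      _ < F.card := hcon
  obtain ⟨F', hF'sub, hF'ne, hF'deg⟩ := peel_lemma (6 * (2 * k + 2) + 12) F himg
  have hFmem : ∀ p ∈ F', G.Adj a p.1 ∧ G.Adj p.1 p.2 ∧ p.2 ≠ a := by
    intro p hpF
    have := hF'sub hpF
    rw [hFdef] at this
    exact (Finset.mem_filter.1 this).2
  obtain ⟨p0, hp0⟩ := hF'ne
  have hax : G.Adj a p0.1 := (hFmem _ hp0).1
  obtain ⟨u, w, hwc, hwlen, hwrb, hwmem⟩ := hcyc s(a, p0.1) (G.mem_edgeSet.2 hax)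
  obtain ⟨q, hqpath, hqlen, hqnodup⟩ := extract_path w hwc hwrb hax hwmem
  have hqlen' : q.length = 2 * l := by omega
  -- forbidden sets
  set FV0 : Finset V := q.support.toFinset \ {p0.1, a} with hFV0
  set FC0 : Finset γ := (q.edges.map c).toFinset with hFC0
  have hFV0card : FV0.card + 2 * (k - l) ≤ 2 * k + 2 := by
    have h1 : FV0.card ≤ q.support.toFinset.card :=
      Finset.card_le_card (Finset.sdiff_subset)
    have h2 : q.support.toFinset.card ≤ q.support.length := q.support.toFinset_card_le
    have h3 : q.support.length = q.length + 1 := Walk.length_support q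
    omega
  have hFC0card : FC0.card + 2 * (k - l) ≤ 2 * k + 2 := by
    have h2 : FC0.card ≤ (q.edges.map c).length := (q.edges.map c).toFinset_card_le
    have h3 : (q.edges.map c).length = q.length := by
      rw [List.length_map, Walk.length_edges]
    omega
  have hxFV0 : p0.1 ∉ FV0 := by
    intro h
    exact (Finset.mem_sdiff.1 h).2 (by simp)
  have haFV0 : a ∉ FV0 := by
    intro h
    exact (Finset.mem_sdiff.1 h).2 (by simp)
  have hcax : c s(a, p0.1) ∉ FC0 := by
    intro h
    exact (List.nodup_cons.1 hqnodup).1 (List.mem_toFinset.1 h)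
  obtain ⟨W, hWlen, hWpath, hWsup, hWnodup, hWcol⟩ :=
    chain_lemma hp a F' (2 * k + 2) hFmem
      (fun p hpF => (hF'deg p hpF).1) (fun p hpF => (hF'deg p hpF).2)
      (k - l) p0.1 FV0 FC0 ⟨p0.2, by rw [Prod.mk.eta]; exact hp0⟩
      hFV0card hFC0card hxFV0 haFV0 hcax
  -- assemble the rainbow (2k+1)-cycle
  have hqcol : (q.edges.map c).Nodup := (List.nodup_cons.1 hqnodup).2
  have hrain : ((q.reverse.append W).edges.map c).Nodup := by
    rw [Walk.edges_append, List.map_append]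
    refine List.Nodup.append ?_ hWnodup ?_
    · rw [Walk.edges_reverse, List.map_reverse]
      exact List.nodup_reverse.2 hqcol
    · intro col hcolq hcolW
      rw [Walk.edges_reverse, List.map_reverse, List.mem_reverse] at hcolq
      obtain ⟨e, heW, hce⟩ := List.mem_map.1 hcolW
      exact hWcol e heW (by rw [hFC0]; exact hce ▸ List.mem_toFinset.2 hcolq)
  have hNlen : (q.reverse.append W).length = 2 * k + 1 := by
    rw [Walk.length_append, Walk.length_reverse, hqlen', hWlen]
    omega
  have htaileq : (q.reverse.append W).support.tail =
      q.reverse.support.tail ++ W.support.tail := by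
    rw [Walk.support_append, Walk.support_eq_cons q.reverse]
    rfl
  have htail : (q.reverse.append W).support.tail.Nodup := by
    rw [htaileq]
    refine List.Nodup.append ?_ ?_ ?_
    · have h := hqpath.reverse.support_nodup
      rw [Walk.support_eq_cons] at h
      exact (List.nodup_cons.1 h).2
    · have h := hWpath.support_nodup
      rw [Walk.support_eq_cons] at h
      exact (List.nodup_cons.1 h).2
    · intro u huq huW
      have hua : u ≠ a := by
        have h := hqpath.reverse.support_nodup
        rw [Walk.support_eq_cons] at h
        intro h'
        subst h'
        exact (List.nodup_cons.1 h).1 huq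
      have huq' : u ∈ q.support := by
        have h2 : u ∈ q.reverse.support := by
          rw [Walk.support_eq_cons q.reverse]
          exact List.mem_cons_of_mem _ huq
        rwa [Walk.support_reverse, List.mem_reverse] at h2
      have huW' : u ∈ W.support := by
        rw [Walk.support_eq_cons W]
        exact List.mem_cons_of_mem _ huW
      by_cases hux : u = p0.1
      · subst hux
        have h := hWpath.support_nodup
        rw [Walk.support_eq_cons] at h
        exact (List.nodup_cons.1 h).1 huW
      · have hmem : u ∈ FV0 := by
          rw [hFV0]
          exact Finset.mem_sdiff.2 ⟨List.mem_toFinset.2 huq', by simp [hux, hua]⟩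
        exact hWsup u huW' hmem
  apply hno
  refine ⟨a, q.reverse.append W, ?_, hNlen, hrain⟩
  exact ⟨⟨⟨List.Nodup.of_map c hrain⟩, by
    intro h
    rw [h] at hNlen
    simp at hNlen⟩, htail⟩
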